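/- Covariance-Intersection fusion of a pair of weighted Gaussian components: let n ≥ 1, let m_a, m_b ∈ ℝ^n, let P_a, P_b be symmetric positive definite real n×n matrices, let α_a, α_b > 0, and let ω ∈ (0,1). Define P_{ab} := (ω P_a⁻¹ + (1−ω) P_b⁻¹)⁻¹, m_{ab} := P_{ab}(ω P_a⁻¹ m_a + (1−ω) P_b⁻¹ m_b), and α_{ab} := α_a^{ω} α_b^{1−ω} β(ω, P_a) β(1−ω, P_b) N(m_a − m_b; 0, P_a/ω + P_b/(1−ω)), where β(ω, P) := det(2π P ω⁻¹)^{1/2} / det(2πP)^{ω/2}. Then for every x ∈ ℝ^n, (α_a N(x; m_a, P_a))^{ω} · (α_b N(x; m_b, P_b))^{1−ω} = α_{ab} N(x; m_{ab}, P_{ab}). -/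

import Mathlib

open Matrix

/-- The Gaussian density `N(x; m, P)` on `ℝⁿ`. -/
noncomputable def gaussN {n : ℕ} (m : Fin n → ℝ) (P : Matrix (Fin n) (Fin n) ℝ)
    (x : Fin n → ℝ) : ℝ :=
  (((2 * Real.pi) • P).det) ^ (-(1 / 2 : ℝ)) *
    Real.exp (-(1 / 2 : ℝ) * ((x - m) ⬝ᵥ (P⁻¹ *ᵥ (x - m))))

/-- The constant `β(ω, P) = det(2πPω⁻¹)^{1/2} / det(2πP)^{ω/2}`. -/
noncomputable def gaussBeta {n : ℕ} (ω : ℝ) (P : Matrix (Fin n) (Fin n) ℝ) : ℝ :=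
  (((2 * Real.pi * ω⁻¹) • P).det) ^ ((1 : ℝ) / 2) / (((2 * Real.pi) • P).det) ^ (ω / 2)

variable {n : ℕ}

lemma myPosDef_smul {c : ℝ} (hc : 0 < c) {M : Matrix (Fin n) (Fin n) ℝ} (hM : M.PosDef) :
    (c • M).PosDef := by
  refine ⟨?_, fun v hv => ?_⟩
  · unfold Matrix.IsHermitian at *
    rw [conjTranspose_smul, hM.1.eq]
    simp
  · exact (hM.smul hc).2 hv

lemma myDotSymm {M : Matrix (Fin n) (Fin n) ℝ} (hM : Mᵀ = M) (u v : Fin n → ℝ) :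
    u ⬝ᵥ M *ᵥ v = v ⬝ᵥ M *ᵥ u := by
  rw [dotProduct_mulVec, ← mulVec_transpose, hM, dotProduct_comm]

lemma myMulVecDot {M : Matrix (Fin n) (Fin n) ℝ} (hM : Mᵀ = M) (u z : Fin n → ℝ) :
    (M *ᵥ u) ⬝ᵥ z = u ⬝ᵥ (M *ᵥ z) := by
  rw [dotProduct_mulVec, ← mulVec_transpose, hM, dotProduct_comm, dotProduct_mulVec,
    ← mulVec_transpose, hM]

lemma symm_of_posDef {M : Matrix (Fin n) (Fin n) ℝ} (hM : M.PosDef) : Mᵀ = M := by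
  rw [← conjTranspose_eq_transpose_of_trivial]; exact hM.1

lemma expand_quad {M : Matrix (Fin n) (Fin n) ℝ} (hM : Mᵀ = M) (u v : Fin n → ℝ) :
    (u - v) ⬝ᵥ (M *ᵥ (u - v))
      = u ⬝ᵥ (M *ᵥ u) - 2 * (u ⬝ᵥ (M *ᵥ v)) + v ⬝ᵥ (M *ᵥ v) := by
  rw [Matrix.mulVec_sub, dotProduct_sub, sub_dotProduct, sub_dotProduct,
    myDotSymm hM v u]
  ring

lemma smul_quad (c : ℝ) (M : Matrix (Fin n) (Fin n) ℝ) (u : Fin n → ℝ) :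
    u ⬝ᵥ ((c • M) *ᵥ u) = c * (u ⬝ᵥ (M *ᵥ u)) := by
  rw [Matrix.smul_mulVec, dotProduct_smul, smul_eq_mul]


/-- Covariance-Intersection fusion of a pair of weighted Gaussian
components: `(αₐN(x; mₐ, Pₐ))^ω (α_bN(x; m_b, P_b))^{1−ω} = α_{ab} N(x; m_{ab}, P_{ab})`
with `P_{ab} = (ωPₐ⁻¹ + (1−ω)P_b⁻¹)⁻¹`, `m_{ab} = P_{ab}(ωPₐ⁻¹mₐ + (1−ω)P_b⁻¹m_b)` and
`α_{ab} = αₐ^ω α_b^{1−ω} β(ω,Pₐ) β(1−ω,P_b) N(mₐ−m_b; 0, Pₐ/ω + P_b/(1−ω))`. -/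
theorem CI_fusion_weighted_gaussian_pair
    {n : ℕ} (hn : 1 ≤ n) (ma mb : Fin n → ℝ)
    (Pa Pb : Matrix (Fin n) (Fin n) ℝ) (hPa : Pa.PosDef) (hPb : Pb.PosDef)
    (αa αb : ℝ) (hαa : 0 < αa) (hαb : 0 < αb)
    (ω : ℝ) (hω : ω ∈ Set.Ioo (0 : ℝ) 1)
    (Pab : Matrix (Fin n) (Fin n) ℝ) (mab : Fin n → ℝ) (αab : ℝ)
    (hPab : Pab = (ω • Pa⁻¹ + (1 - ω) • Pb⁻¹)⁻¹)
    (hmab : mab = Pab *ᵥ (ω • (Pa⁻¹ *ᵥ ma) + (1 - ω) • (Pb⁻¹ *ᵥ mb)))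
    (hαab : αab = αa ^ ω * αb ^ (1 - ω) * gaussBeta ω Pa * gaussBeta (1 - ω) Pb *
      gaussN (0 : Fin n → ℝ) (ω⁻¹ • Pa + (1 - ω)⁻¹ • Pb) (ma - mb)) :
    ∀ x : Fin n → ℝ,
      (αa * gaussN ma Pa x) ^ ω * (αb * gaussN mb Pb x) ^ (1 - ω)
        = αab * gaussN mab Pab x := by
  obtain ⟨hω0, hω1⟩ := hω
  have hω1' : 0 < 1 - ω := by linarith
  have hPad : IsUnit Pa.det := hPa.det_pos.ne'.isUnit
  have hPbd : IsUnit Pb.det := hPb.det_pos.ne'.isUnit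
  set A : Matrix (Fin n) (Fin n) ℝ := ω⁻¹ • Pa with hAdef
  set B : Matrix (Fin n) (Fin n) ℝ := (1-ω)⁻¹ • Pb with hBdef
  have hA : A.PosDef := myPosDef_smul (by positivity) hPa
  have hB : B.PosDef := myPosDef_smul (by positivity) hPb
  have hAd : IsUnit A.det := hA.det_pos.ne'.isUnit
  have hBd : IsUnit B.det := hB.det_pos.ne'.isUnit
  have hAinv : A⁻¹ = ω • Pa⁻¹ := by
    apply Matrix.inv_eq_left_inv
    rw [hAdef, Matrix.smul_mul, Matrix.mul_smul, smul_smul,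
      mul_inv_cancel₀ hω0.ne', one_smul, Matrix.nonsing_inv_mul _ hPad]
  have hBinv : B⁻¹ = (1-ω) • Pb⁻¹ := by
    apply Matrix.inv_eq_left_inv
    rw [hBdef, Matrix.smul_mul, Matrix.mul_smul, smul_smul,
      mul_inv_cancel₀ hω1'.ne', one_smul, Matrix.nonsing_inv_mul _ hPbd]
  set C : Matrix (Fin n) (Fin n) ℝ := A⁻¹ + B⁻¹ with hCdef
  set S : Matrix (Fin n) (Fin n) ℝ := A + B with hSdef
  have hC : C.PosDef := hA.inv.add hB.inv
  have hS : S.PosDef := hA.add hB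
  have hCd : IsUnit C.det := hC.det_pos.ne'.isUnit
  have hSd : IsUnit S.det := hS.det_pos.ne'.isUnit
  have hPab' : Pab = C⁻¹ := by rw [hPab, hCdef, hAinv, hBinv]
  have hPabInv : Pab⁻¹ = C := by rw [hPab', Matrix.nonsing_inv_nonsing_inv _ hCd]
  have hBCA : B * C * A = S := by
    rw [hCdef, Matrix.mul_add, Matrix.add_mul, Matrix.mul_assoc B A⁻¹ A,
      Matrix.nonsing_inv_mul _ hAd, Matrix.mul_one, Matrix.mul_nonsing_inv _ hBd,
      Matrix.one_mul, hSdef]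
    exact add_comm B A
  have hACB : A * C * B = S := by
    rw [hCdef, Matrix.mul_add, Matrix.add_mul, Matrix.mul_assoc A B⁻¹ B,
      Matrix.nonsing_inv_mul _ hBd, Matrix.mul_one, Matrix.mul_nonsing_inv _ hAd,
      Matrix.one_mul, hSdef]
    exact add_comm B A
  have hSinv1 : S⁻¹ = A⁻¹ * (C⁻¹ * B⁻¹) := by
    rw [← hBCA, Matrix.mul_inv_rev, Matrix.mul_inv_rev]
  have hSinv2 : S⁻¹ = B⁻¹ * (C⁻¹ * A⁻¹) := by
    rw [← hACB, Matrix.mul_inv_rev, Matrix.mul_inv_rev]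
  have keyA : A⁻¹ * (C⁻¹ * A⁻¹) = A⁻¹ - S⁻¹ := by
    have h1 : C - B⁻¹ = A⁻¹ := by rw [hCdef]; abel
    calc A⁻¹ * (C⁻¹ * A⁻¹) = A⁻¹ * (C⁻¹ * (C - B⁻¹)) := by rw [h1]
      _ = A⁻¹ * (C⁻¹ * C) - A⁻¹ * (C⁻¹ * B⁻¹) := by noncomm_ring
      _ = A⁻¹ - S⁻¹ := by rw [Matrix.nonsing_inv_mul _ hCd, Matrix.mul_one, hSinv1]
  have keyB : B⁻¹ * (C⁻¹ * B⁻¹) = B⁻¹ - S⁻¹ := by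
    have h1 : C - A⁻¹ = B⁻¹ := by rw [hCdef]; abel
    calc B⁻¹ * (C⁻¹ * B⁻¹) = B⁻¹ * (C⁻¹ * (C - A⁻¹)) := by rw [h1]
      _ = B⁻¹ * (C⁻¹ * C) - B⁻¹ * (C⁻¹ * A⁻¹) := by noncomm_ring
      _ = B⁻¹ - S⁻¹ := by rw [Matrix.nonsing_inv_mul _ hCd, Matrix.mul_one, hSinv2]
  have hdet : S.det = B.det * C.det * A.det := by
    rw [← hBCA, Matrix.det_mul, Matrix.det_mul]
  -- symmetry facts
  have tA : A⁻¹ᵀ = A⁻¹ := symm_of_posDef hA.inv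
  have tB : B⁻¹ᵀ = B⁻¹ := symm_of_posDef hB.inv
  have tC : Cᵀ = C := symm_of_posDef hC
  have tCi : C⁻¹ᵀ = C⁻¹ := symm_of_posDef hC.inv
  have tS : S⁻¹ᵀ = S⁻¹ := symm_of_posDef hS.inv
  -- the fused mean
  set w : Fin n → ℝ := A⁻¹ *ᵥ ma + B⁻¹ *ᵥ mb with hwdef
  have hmab' : mab = C⁻¹ *ᵥ w := by
    rw [hmab, hPab', hwdef, hAinv, hBinv, Matrix.smul_mulVec, Matrix.smul_mulVec]
  have hCmab : C *ᵥ mab = w := by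
    rw [hmab', Matrix.mulVec_mulVec, Matrix.mul_nonsing_inv _ hCd, Matrix.one_mulVec]
  intro x
  -- quadratic identity
  have h4 : mab ⬝ᵥ (C *ᵥ mab)
      = (ma ⬝ᵥ (A⁻¹ *ᵥ ma) - ma ⬝ᵥ (S⁻¹ *ᵥ ma)) + 2 * (ma ⬝ᵥ (S⁻¹ *ᵥ mb))
        + (mb ⬝ᵥ (B⁻¹ *ᵥ mb) - mb ⬝ᵥ (S⁻¹ *ᵥ mb)) := by
    have t11 : (A⁻¹ *ᵥ ma) ⬝ᵥ (C⁻¹ *ᵥ (A⁻¹ *ᵥ ma))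
        = ma ⬝ᵥ (A⁻¹ *ᵥ ma) - ma ⬝ᵥ (S⁻¹ *ᵥ ma) := by
      rw [myMulVecDot tA, Matrix.mulVec_mulVec, Matrix.mulVec_mulVec,
        Matrix.mul_assoc, keyA, Matrix.sub_mulVec, dotProduct_sub]
    have t12 : (A⁻¹ *ᵥ ma) ⬝ᵥ (C⁻¹ *ᵥ (B⁻¹ *ᵥ mb)) = ma ⬝ᵥ (S⁻¹ *ᵥ mb) := by
      rw [myMulVecDot tA, Matrix.mulVec_mulVec, Matrix.mulVec_mulVec,
        Matrix.mul_assoc, ← hSinv1]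
    have t21 : (B⁻¹ *ᵥ mb) ⬝ᵥ (C⁻¹ *ᵥ (A⁻¹ *ᵥ ma)) = ma ⬝ᵥ (S⁻¹ *ᵥ mb) := by
      rw [myMulVecDot tB, Matrix.mulVec_mulVec, Matrix.mulVec_mulVec,
        Matrix.mul_assoc, ← hSinv2, myDotSymm tS mb ma]
    have t22 : (B⁻¹ *ᵥ mb) ⬝ᵥ (C⁻¹ *ᵥ (B⁻¹ *ᵥ mb))
        = mb ⬝ᵥ (B⁻¹ *ᵥ mb) - mb ⬝ᵥ (S⁻¹ *ᵥ mb) := by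
      rw [myMulVecDot tB, Matrix.mulVec_mulVec, Matrix.mulVec_mulVec,
        Matrix.mul_assoc, keyB, Matrix.sub_mulVec, dotProduct_sub]
    calc mab ⬝ᵥ (C *ᵥ mab) = (C⁻¹ *ᵥ w) ⬝ᵥ w := by rw [hCmab, hmab']
      _ = w ⬝ᵥ (C⁻¹ *ᵥ w) := myMulVecDot tCi w w
      _ = _ := by
        rw [hwdef, Matrix.mulVec_add, dotProduct_add, add_dotProduct,
          add_dotProduct, t11, t12, t21, t22]
        ring
  have hQ : ω * ((x - ma) ⬝ᵥ (Pa⁻¹ *ᵥ (x - ma))) + (1 - ω) * ((x - mb) ⬝ᵥ (Pb⁻¹ *ᵥ (x - mb)))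
      = (x - mab) ⬝ᵥ (Pab⁻¹ *ᵥ (x - mab)) + (ma - mb) ⬝ᵥ (S⁻¹ *ᵥ (ma - mb)) := by
    rw [← smul_quad ω Pa⁻¹, ← smul_quad (1-ω) Pb⁻¹, ← hAinv, ← hBinv, hPabInv]
    rw [expand_quad tA, expand_quad tB, expand_quad tC x mab, expand_quad tS ma mb]
    have h2 : x ⬝ᵥ (C *ᵥ x) = x ⬝ᵥ (A⁻¹ *ᵥ x) + x ⬝ᵥ (B⁻¹ *ᵥ x) := by
      rw [hCdef, Matrix.add_mulVec, dotProduct_add]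
    have h3 : x ⬝ᵥ (C *ᵥ mab) = x ⬝ᵥ (A⁻¹ *ᵥ ma) + x ⬝ᵥ (B⁻¹ *ᵥ mb) := by
      rw [hCmab, hwdef, dotProduct_add]
    rw [h2, h3, h4]
    ring
  -- positivity of scaled determinants
  have h2pi : (0:ℝ) < 2 * Real.pi := by positivity
  have hda : 0 < ((2*Real.pi) • Pa).det := (myPosDef_smul h2pi hPa).det_pos
  have hdb : 0 < ((2*Real.pi) • Pb).det := (myPosDef_smul h2pi hPb).det_pos
  have hdA : 0 < ((2*Real.pi) • A).det := (myPosDef_smul h2pi hA).det_pos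
  have hdB : 0 < ((2*Real.pi) • B).det := (myPosDef_smul h2pi hB).det_pos
  have hdS : 0 < ((2*Real.pi) • S).det := (myPosDef_smul h2pi hS).det_pos
  have hdab : 0 < ((2*Real.pi) • Pab).det := by
    rw [hPab']; exact (myPosDef_smul h2pi hC.inv).det_pos
  have hdAB : ((2*Real.pi) • A).det * ((2*Real.pi) • B).det
      = ((2*Real.pi) • S).det * ((2*Real.pi) • Pab).det := by
    rw [hPab']
    simp only [Matrix.det_smul]
    rw [Matrix.det_nonsing_inv, Ring.inverse_eq_inv', hdet]
    have hCd0 : C.det ≠ 0 := hC.det_pos.ne'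
    field_simp
  have hsm1 : (2*Real.pi*ω⁻¹) • Pa = (2*Real.pi) • A := by rw [hAdef, smul_smul]
  have hsm2 : (2*Real.pi*(1-ω)⁻¹) • Pb = (2*Real.pi) • B := by rw [hBdef, smul_smul]
  -- unfold and normalize
  rw [hαab]
  simp only [gaussN, gaussBeta, sub_zero, hsm1, hsm2]
  rw [Real.mul_rpow hαa.le (by positivity), Real.mul_rpow hαb.le (by positivity),
    Real.mul_rpow (by positivity) (Real.exp_pos _).le,
    Real.mul_rpow (by positivity) (Real.exp_pos _).le,
    ← Real.rpow_mul hda.le, ← Real.rpow_mul hdb.le,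
    ← Real.exp_mul, ← Real.exp_mul,
    show (-(1/2):ℝ)*ω = -(ω/2) by ring,
    show (-(1/2):ℝ)*(1-ω) = -((1-ω)/2) by ring,
    Real.rpow_neg hda.le, Real.rpow_neg hdb.le,
    Real.rpow_neg hdS.le, Real.rpow_neg hdab.le]
  have hone : ((2*Real.pi) • A).det ^ ((1:ℝ)/2) * ((2*Real.pi) • B).det ^ ((1:ℝ)/2)
      * ((((2*Real.pi) • S).det ^ ((1:ℝ)/2))⁻¹ * ((((2*Real.pi) • Pab).det ^ ((1:ℝ)/2))⁻¹)) = 1 := by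
    rw [← Real.mul_rpow hdA.le hdB.le, hdAB, Real.mul_rpow hdS.le hdab.le,
      mul_mul_mul_comm, mul_inv_cancel₀ (by positivity), mul_inv_cancel₀ (by positivity), mul_one]
  have hE : Real.exp (-(1/2) * ((x - ma) ⬝ᵥ (Pa⁻¹ *ᵥ (x - ma))) * ω)
        * Real.exp (-(1/2) * ((x - mb) ⬝ᵥ (Pb⁻¹ *ᵥ (x - mb))) * (1-ω))
      = Real.exp (-(1/2) * ((ma - mb) ⬝ᵥ (S⁻¹ *ᵥ (ma - mb))))
        * Real.exp (-(1/2) * ((x - mab) ⬝ᵥ (Pab⁻¹ *ᵥ (x - mab)))) := by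
    rw [← Real.exp_add, ← Real.exp_add]
    congr 1
    linear_combination (-(1/2 : ℝ)) * hQ
  linear_combination
    (αa ^ ω * αb ^ (1-ω) * ((((2*Real.pi) • Pa).det ^ (ω/2))⁻¹)
      * ((((2*Real.pi) • Pb).det ^ ((1-ω)/2))⁻¹)) * hE
    - (αa ^ ω * αb ^ (1-ω) * ((((2*Real.pi) • Pa).det ^ (ω/2))⁻¹)
      * ((((2*Real.pi) • Pb).det ^ ((1-ω)/2))⁻¹)
      * Real.exp (-(1/2) * ((ma - mb) ⬝ᵥ (S⁻¹ *ᵥ (ma - mb))))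
      * Real.exp (-(1/2) * ((x - mab) ⬝ᵥ (Pab⁻¹ *ᵥ (x - mab))))) * hone
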